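/- Let v(y) = 1 if y ≥ 0 and v(y) = 0 if y < 0. For every κ' > 0 and every nonzero real y, |v(y) - (1/(2πi)) ∫_{κ'-i}^{κ'+i} e^{ys}/s ds| ≤ e^{yκ'}/(π|y|). -/

import Mathlib

open Complex Real

/-- `v y = 1` if `y ≥ 0` and `0` otherwise. -/
noncomputable def v (y : ℝ) : ℝ := if 0 ≤ y then 1 else 0

section PerronAux
open intervalIntegral Set Filter Topology


lemma vert_bound (y a : ℝ) (ha : a ≠ 0) :
    ‖∫ t in (-1:ℝ)..1, Complex.exp (y*(a + t*I))/(a + t*I)‖ ≤ 2 * Real.exp (y*a) / |a| := by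
  have h : ∀ t ∈ Set.uIoc (-1:ℝ) 1, ‖Complex.exp (y*(a + t*I))/(a + t*I)‖ ≤ Real.exp (y*a) / |a| := by
    intro t _
    rw [norm_div, Complex.norm_exp]
    have h1 : ((y:ℂ)*(a + t*I)).re = y*a := by simp
    rw [h1]
    have h2 : |a| ≤ ‖(a:ℂ) + t*I‖ := by
      have := Complex.abs_re_le_norm ((a:ℂ) + t*I)
      simpa using this
    have h3 : (0:ℝ) < |a| := abs_pos.2 ha
    exact div_le_div_of_nonneg_left (Real.exp_pos _).le h3 h2 |>.trans_eq rfl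
  calc ‖∫ t in (-1:ℝ)..1, Complex.exp (y*(a + t*I))/(a + t*I)‖
      ≤ Real.exp (y*a) / |a| * |1 - (-1)| := intervalIntegral.norm_integral_le_of_norm_le_const h
    _ = 2 * Real.exp (y*a) / |a| := by rw [show |(1:ℝ) - (-1)| = 2 by norm_num]; ring

lemma cont_exp_mul (y : ℝ) : Continuous fun x : ℝ => Real.exp (y*x) := by continuity

lemma integral_exp_mul' (y a b : ℝ) (hy : y ≠ 0) :
    ∫ x in a..b, Real.exp (y*x) = (Real.exp (y*b) - Real.exp (y*a)) / y := by
  have : ∀ x ∈ Set.uIcc a b, HasDerivAt (fun x => Real.exp (y*x) / y) (Real.exp (y*x)) x := by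
    intro x _
    have h0 : HasDerivAt (fun x : ℝ => y * x) y x := by
      simpa using (hasDerivAt_id x).const_mul y
    have := (Real.hasDerivAt_exp (y*x)).comp x h0
    have := this.div_const y
    simpa [mul_div_cancel_right₀ _ hy] using this
  rw [intervalIntegral.integral_eq_sub_of_hasDerivAt this ((cont_exp_mul y).intervalIntegrable a b)]
  ring

lemma horiz_bound (y c a b : ℝ) (hc : |c| = 1) (hab : a ≤ b) (hy : y ≠ 0) :
    ‖∫ x in a..b, Complex.exp (y*(x + c*I))/(x + c*I)‖
      ≤ (Real.exp (y*b) - Real.exp (y*a)) / y := by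
  have key : ‖∫ x in a..b, Complex.exp (y*(x + c*I))/(x + c*I)‖ ≤ |∫ x in a..b, Real.exp (y*x)| := by
    apply intervalIntegral.norm_integral_le_abs_of_norm_le
    · apply Filter.Eventually.of_forall
      intro t
      rw [norm_div, Complex.norm_exp]
      have h1 : ((y:ℂ)*(t + c*I)).re = y*t := by simp
      rw [h1]
      have h2 : (1:ℝ) ≤ ‖(t:ℂ) + c*I‖ := by
        have := Complex.abs_im_le_norm ((t:ℂ) + c*I)
        simp only [Complex.add_im, Complex.ofReal_im, Complex.mul_im, Complex.ofReal_re,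
          Complex.I_im, Complex.I_re, Complex.mul_re] at this
        rw [← hc]; simpa using this
      calc Real.exp (y*t) / ‖(t:ℂ) + c*I‖ ≤ Real.exp (y*t) / 1 :=
            div_le_div_of_nonneg_left (Real.exp_pos _).le one_pos h2
        _ = Real.exp (y*t) := div_one _
    · exact (cont_exp_mul y).intervalIntegrable a b
  have pos : 0 ≤ ∫ x in a..b, Real.exp (y*x) :=
    intervalIntegral.integral_nonneg hab (fun x _ => (Real.exp_pos _).le)
  rw [_root_.abs_of_nonneg pos, integral_exp_mul' y a b hy] at key
  exact key

lemma horiz_inv (c a b : ℝ) (hc : c ≠ 0) :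
    ∫ x in a..b, ((x:ℂ) + c*I)⁻¹ = Complex.log (b + c*I) - Complex.log (a + c*I) := by
  have hne : ∀ x : ℝ, ((x:ℂ) + c*I) ≠ 0 := by
    intro x h
    have : ((x:ℂ) + c*I).im = c := by simp
    rw [h] at this; simp at this; exact hc this.symm
  have hder : ∀ x ∈ Set.uIcc a b,
      HasDerivAt (fun x : ℝ => Complex.log (x + c*I)) (((x:ℂ) + c*I)⁻¹) x := by
    intro x _
    have hmem : ((x:ℂ) + c*I) ∈ Complex.slitPlane := by
      rw [Complex.mem_slitPlane_iff]
      right; simp [hc]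
    have h1 : HasDerivAt (fun x : ℝ => (x:ℂ) + c*I) 1 x := by
      simpa using (Complex.ofRealCLM.hasDerivAt (x := x)).add_const ((c:ℂ)*I)
    simpa using h1.clog_real hmem
  have hint : IntervalIntegrable (fun x : ℝ => ((x:ℂ) + c*I)⁻¹) MeasureTheory.volume a b := by
    apply Continuous.intervalIntegrable
    exact (Continuous.add (Complex.continuous_ofReal) continuous_const).inv₀ hne
  exact intervalIntegral.integral_eq_sub_of_hasDerivAt hder hint

lemma vert_inv_pos (a : ℝ) (ha : 0 < a) :
    I • ∫ t in (-1:ℝ)..1, ((a:ℂ) + t*I)⁻¹ = Complex.log (a + I) - Complex.log (a - I) := by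
  rw [← intervalIntegral.integral_smul]
  have hne : ∀ t : ℝ, ((a:ℂ) + t*I) ≠ 0 := by
    intro t h
    have : ((a:ℂ) + t*I).re = a := by simp
    rw [h] at this; simp at this; exact ha.ne this
  have hder : ∀ t ∈ Set.uIcc (-1:ℝ) 1,
      HasDerivAt (fun t : ℝ => Complex.log (a + t*I)) (I • ((a:ℂ) + t*I)⁻¹) t := by
    intro t _
    have hmem : ((a:ℂ) + t*I) ∈ Complex.slitPlane := by
      rw [Complex.mem_slitPlane_iff]; left; simpa using ha
    have h1 : HasDerivAt (fun t : ℝ => (a:ℂ) + t*I) I t := by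
      have := (Complex.ofRealCLM.hasDerivAt (x := t)).mul_const I
      simpa using this.const_add (a:ℂ)
    have := h1.clog_real hmem
    simpa [div_eq_mul_inv, smul_eq_mul, mul_comm] using this
  have hint : IntervalIntegrable (fun t : ℝ => I • ((a:ℂ) + t*I)⁻¹) MeasureTheory.volume (-1) 1 := by
    apply Continuous.intervalIntegrable
    exact Continuous.const_smul (c := I)
      ((continuous_const.add (Complex.continuous_ofReal.mul continuous_const)).inv₀ hne)
  rw [intervalIntegral.integral_eq_sub_of_hasDerivAt hder hint]
  norm_num [Complex.ofReal_neg, sub_eq_add_neg]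

lemma vert_inv_neg (a : ℝ) (ha : 0 < a) :
    I • ∫ t in (-1:ℝ)..1, ((-a:ℝ) + t*I)⁻¹ = Complex.log (a - I) - Complex.log (a + I) := by
  rw [← intervalIntegral.integral_smul]
  have hne : ∀ t : ℝ, ((a:ℂ) - t*I) ≠ 0 := by
    intro t h
    have : ((a:ℂ) - t*I).re = a := by simp
    rw [h] at this; simp at this; exact ha.ne this
  have hder : ∀ t ∈ Set.uIcc (-1:ℝ) 1,
      HasDerivAt (fun t : ℝ => Complex.log (a - t*I)) (I • (((-a:ℝ):ℂ) + t*I)⁻¹) t := by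
    intro t _
    have hmem : ((a:ℂ) - t*I) ∈ Complex.slitPlane := by
      rw [Complex.mem_slitPlane_iff]; left; simpa using ha
    have h1 : HasDerivAt (fun t : ℝ => (a:ℂ) - t*I) (-I) t := by
      have := ((Complex.ofRealCLM.hasDerivAt (x := t)).mul_const I).neg
      simpa [sub_eq_add_neg] using this.const_add (a:ℂ)
    have := h1.clog_real hmem
    have heq : -I / ((a:ℂ) - t*I) = I • (((-a:ℝ):ℂ) + t*I)⁻¹ := by
      rw [smul_eq_mul, div_eq_mul_inv]
      rw [show (((-a:ℝ):ℂ) + t*I) = -((a:ℂ) - t*I) by push_cast; ring]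
      rw [inv_neg]; ring
    rw [← heq]; exact this
  have hint : IntervalIntegrable (fun t : ℝ => I • (((-a:ℝ):ℂ) + t*I)⁻¹) MeasureTheory.volume (-1) 1 := by
    apply Continuous.intervalIntegrable
    apply Continuous.const_smul (c := I)
    apply Continuous.inv₀
    · exact continuous_const.add (Complex.continuous_ofReal.mul continuous_const)
    · intro t h
      have : (((-a:ℝ):ℂ) + t*I) = -((a:ℂ) - t*I) := by push_cast; ring
      rw [this, neg_eq_zero] at h
      exact hne t h
  rw [intervalIntegral.integral_eq_sub_of_hasDerivAt hder hint]
  norm_num [Complex.ofReal_neg, sub_eq_add_neg]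

lemma log_sum (σ : ℝ) (hσ : 0 < σ) :
    Complex.log ((-σ:ℝ) + I) - Complex.log ((-σ:ℝ) + (-1:ℝ)*I)
      + Complex.log ((σ:ℝ) + I) - Complex.log ((σ:ℝ) - I) = 2*π*I := by
  set w : ℂ := (σ:ℝ) + I with hw
  have hre : w.re = σ := by simp [hw]
  have him : w.im = 1 := by simp [hw]
  have habs_pos : w ≠ 0 := by
    intro h; rw [h] at him; simp at him
  have harg_ne : w.arg ≠ π := by
    intro h
    rw [Complex.arg_eq_pi_iff] at h
    rw [him] at h; norm_num at h
  have h1 : ((-σ:ℝ) + I : ℂ) = -((starRingEnd ℂ) w) := by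
    simp [hw, Complex.ext_iff]
  have h2 : ((-σ:ℝ) + (-1:ℝ)*I : ℂ) = -w := by
    simp [hw, Complex.ext_iff]
  have h3 : ((σ:ℝ) - I : ℂ) = (starRingEnd ℂ) w := by
    simp [hw, Complex.ext_iff]
  rw [h1, h2, h3]
  have habs1 : ‖-((starRingEnd ℂ) w)‖ = ‖w‖ := by simp
  have habs2 : ‖-w‖ = ‖w‖ := by simp
  have habs3 : ‖(starRingEnd ℂ) w‖ = ‖w‖ := by simp
  have hargc : ((starRingEnd ℂ) w).arg = -w.arg := by
    rw [Complex.arg_conj]; simp [harg_ne]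
  have harg1 : (-((starRingEnd ℂ) w)).arg = -w.arg + π := by
    rw [Complex.arg_neg_eq_arg_add_pi_of_im_neg, hargc]
    simp [him]
  have harg2 : (-w).arg = w.arg - π := by
    rw [Complex.arg_neg_eq_arg_sub_pi_of_im_pos]
    rw [him]; norm_num
  rw [Complex.log, Complex.log, Complex.log, Complex.log,
    habs1, habs2, habs3, hargc, harg1, harg2]
  push_cast
  ring

lemma rect_inv (σ κ' : ℝ) (hσ : 0 < σ) (hκ : 0 < κ') :
    (∫ x in (-σ)..κ', ((x:ℂ) + ((-1:ℝ):ℂ)*I)⁻¹) - (∫ x in (-σ)..κ', ((x:ℂ) + ((1:ℝ):ℂ)*I)⁻¹)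
      + I • (∫ t in (-1:ℝ)..1, ((κ':ℂ) + t*I)⁻¹)
      - I • (∫ t in (-1:ℝ)..1, (((-σ:ℝ):ℂ) + t*I)⁻¹) = 2*π*I := by
  rw [horiz_inv (-1) (-σ) κ' (by norm_num), horiz_inv 1 (-σ) κ' one_ne_zero,
    vert_inv_pos κ' hκ, vert_inv_neg σ hσ]
  have hs := log_sum σ hσ
  have e1 : ((κ':ℂ) + ((1:ℝ):ℂ)*I) = (κ':ℂ) + I := by push_cast; ring
  have e2 : ((-σ:ℝ):ℂ) + ((1:ℝ):ℂ)*I = ((-σ:ℝ):ℂ) + I := by push_cast; ring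
  have e3 : ((κ':ℂ) + ((-1:ℝ):ℂ)*I) = (κ':ℂ) - I := by push_cast; ring
  rw [e1, e2, e3]
  linear_combination hs

lemma exp_mul_diff (y : ℝ) : Differentiable ℂ (fun s : ℂ => Complex.exp (y*s)) :=
  Complex.differentiable_exp.comp (differentiable_id.const_mul _)

lemma rect_nopole (y κ' σ : ℝ) (hκ : 0 < κ') (hκσ : κ' ≤ σ) :
    (∫ x in κ'..σ, Complex.exp (y*(x + ((-1:ℝ):ℂ)*I))/((x:ℂ) + ((-1:ℝ):ℂ)*I))
      - (∫ x in κ'..σ, Complex.exp (y*(x + ((1:ℝ):ℂ)*I))/((x:ℂ) + ((1:ℝ):ℂ)*I))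
      + I • (∫ t in (-1:ℝ)..1, Complex.exp (y*(σ + t*I))/((σ:ℂ) + t*I))
      - I • (∫ t in (-1:ℝ)..1, Complex.exp (y*(κ' + t*I))/((κ':ℂ) + t*I)) = 0 := by
  have H : DifferentiableOn ℂ (fun s : ℂ => Complex.exp (y*s)/s)
      (Set.uIcc (⟨κ', -1⟩ : ℂ).re (⟨σ, 1⟩ : ℂ).re ×ℂ Set.uIcc (⟨κ', -1⟩ : ℂ).im (⟨σ, 1⟩ : ℂ).im) := by
    intro s hs
    rw [Complex.mem_reProdIm] at hs
    have hre : κ' ≤ s.re := by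
      have := hs.1
      rw [Set.uIcc_of_le (by exact hκσ)] at this
      exact this.1
    have hs0 : s ≠ 0 := by
      intro h
      rw [h] at hre; simp at hre; exact absurd hre (not_le.2 hκ)
    exact (((exp_mul_diff y) s).div differentiableAt_id hs0).differentiableWithinAt
  have := Complex.integral_boundary_rect_eq_zero_of_differentiableOn
    (fun s : ℂ => Complex.exp (y*s)/s) ⟨κ', -1⟩ ⟨σ, 1⟩ H
  simpa using this

lemma g_cont (y : ℝ) : Continuous (dslope (fun s : ℂ => Complex.exp (y*s)) 0) := by
  rw [continuous_iff_continuousAt]; intro x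
  rcases eq_or_ne x 0 with rfl | h
  · exact continuousAt_dslope_same.2 ((exp_mul_diff y) 0)
  · exact (continuousAt_dslope_of_ne h).2 ((exp_mul_diff y).continuous.continuousAt)

lemma g_add_inv (y : ℝ) (s : ℂ) (hs : s ≠ 0) :
    dslope (fun s : ℂ => Complex.exp (y*s)) 0 s + s⁻¹ = Complex.exp (y*s)/s := by
  rw [dslope_of_ne _ hs, slope_def_field]
  field_simp
  simp only [mul_zero, Complex.exp_zero, sub_zero]; ring

lemma rect_g (y κ' σ : ℝ) :
    (∫ x in (-σ)..κ', dslope (fun s : ℂ => Complex.exp (y*s)) 0 (x + ((-1:ℝ):ℂ)*I))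
      - (∫ x in (-σ)..κ', dslope (fun s : ℂ => Complex.exp (y*s)) 0 (x + ((1:ℝ):ℂ)*I))
      + I • (∫ t in (-1:ℝ)..1, dslope (fun s : ℂ => Complex.exp (y*s)) 0 ((κ':ℂ) + t*I))
      - I • (∫ t in (-1:ℝ)..1, dslope (fun s : ℂ => Complex.exp (y*s)) 0 (((-σ:ℝ):ℂ) + t*I)) = 0 := by
  have := Complex.integral_boundary_rect_eq_zero_of_differentiable_on_off_countable
    (dslope (fun s : ℂ => Complex.exp (y*s)) 0) ⟨-σ, -1⟩ ⟨κ', 1⟩ {0} (Set.countable_singleton 0)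
    ((g_cont y).continuousOn)
    (fun x hx => (differentiableAt_dslope_of_ne hx.2).2 ((exp_mul_diff y) x))
  simpa using this

lemma horiz_ne (c : ℝ) (hc : c ≠ 0) (x : ℝ) : ((x:ℂ) + (c:ℂ)*I) ≠ 0 := by
  intro h
  have : ((x:ℂ) + c*I).im = c := by simp
  rw [h] at this; simp at this; exact hc this.symm

lemma vert_ne (a : ℝ) (ha : a ≠ 0) (t : ℝ) : ((a:ℂ) + (t:ℂ)*I) ≠ 0 := by
  intro h
  have : ((a:ℂ) + t*I).re = a := by simp
  rw [h] at this; simp at this; exact ha this.symm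

lemma rect_pole (y κ' σ : ℝ) (hκ : 0 < κ') (hσ : 0 < σ) :
    (∫ x in (-σ)..κ', Complex.exp (y*(x + ((-1:ℝ):ℂ)*I))/((x:ℂ) + ((-1:ℝ):ℂ)*I))
      - (∫ x in (-σ)..κ', Complex.exp (y*(x + ((1:ℝ):ℂ)*I))/((x:ℂ) + ((1:ℝ):ℂ)*I))
      + I • (∫ t in (-1:ℝ)..1, Complex.exp (y*(κ' + t*I))/((κ':ℂ) + t*I))
      - I • (∫ t in (-1:ℝ)..1, Complex.exp (y*((-σ:ℝ) + t*I))/(((-σ:ℝ):ℂ) + t*I)) = 2*π*I := by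
  set g := dslope (fun s : ℂ => Complex.exp (y*s)) 0 with hg
  have hcont_inv_h : ∀ c : ℝ, c ≠ 0 → Continuous (fun x : ℝ => ((x:ℂ) + (c:ℂ)*I)⁻¹) := by
    intro c hc
    exact (Complex.continuous_ofReal.add continuous_const).inv₀ (horiz_ne c hc)
  have hcont_inv_v : ∀ a : ℝ, a ≠ 0 → Continuous (fun t : ℝ => ((a:ℂ) + (t:ℂ)*I)⁻¹) := by
    intro a ha
    exact (continuous_const.add (Complex.continuous_ofReal.mul continuous_const)).inv₀ (vert_ne a ha)
  have splitH : ∀ c : ℝ, c ≠ 0 →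
      (∫ x in (-σ)..κ', Complex.exp (y*(x + (c:ℂ)*I))/((x:ℂ) + (c:ℂ)*I))
        = (∫ x in (-σ)..κ', g (x + (c:ℂ)*I)) + ∫ x in (-σ)..κ', ((x:ℂ) + (c:ℂ)*I)⁻¹ := by
    intro c hc
    have hgc : Continuous fun x : ℝ => g ((x:ℂ) + (c:ℂ)*I) :=
      (g_cont y).comp (Complex.continuous_ofReal.add continuous_const)
    rw [← intervalIntegral.integral_add (hgc.intervalIntegrable _ _)
      ((hcont_inv_h c hc).intervalIntegrable _ _)]
    apply intervalIntegral.integral_congr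
    intro x _
    exact (g_add_inv y _ (horiz_ne c hc x)).symm
  have splitV : ∀ a : ℝ, a ≠ 0 →
      (I • ∫ t in (-1:ℝ)..1, Complex.exp (y*((a:ℝ) + t*I))/((a:ℂ) + t*I))
        = (I • ∫ t in (-1:ℝ)..1, g ((a:ℂ) + t*I)) + I • ∫ t in (-1:ℝ)..1, ((a:ℂ) + t*I)⁻¹ := by
    intro a ha
    have hgc : Continuous fun t : ℝ => g ((a:ℂ) + (t:ℂ)*I) :=
      (g_cont y).comp (continuous_const.add (Complex.continuous_ofReal.mul continuous_const))
    rw [← smul_add, ← intervalIntegral.integral_add (hgc.intervalIntegrable _ _)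
      ((hcont_inv_v a ha).intervalIntegrable _ _)]
    congr 1
    apply intervalIntegral.integral_congr
    intro t _
    exact (g_add_inv y _ (vert_ne a ha t)).symm
  rw [splitH (-1) (by norm_num), splitH 1 one_ne_zero, splitV κ' hκ.ne', splitV (-σ) (by linarith)]
  have h1 := rect_g y κ' σ
  have h2 := rect_inv σ κ' hσ hκ
  push_cast at h1 h2 ⊢
  linear_combination h1 + h2

lemma core (κ' y σ : ℝ) (hκ' : 0 < κ') (hy : y ≠ 0) (hσ : max κ' 1 ≤ σ) :
    ‖((v y : ℂ) -
        (1 / (2 * (Real.pi : ℂ) * Complex.I)) *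
          ∫ t in (-1:ℝ)..1,
            Complex.exp ((y : ℂ) * ((κ' : ℂ) + Complex.I * (t : ℂ))) /
              ((κ' : ℂ) + Complex.I * (t : ℂ)) * Complex.I)‖ ≤
      Real.exp (y * κ') / (Real.pi * |y|) + Real.exp (-|y| * σ) / (Real.pi * σ) := by
  have hσ0 : 0 < σ := lt_of_lt_of_le one_pos (le_trans (le_max_right _ _) hσ)
  have hκσ : κ' ≤ σ := le_trans (le_max_left _ _) hσ
  set V : ℂ := ∫ t in (-1:ℝ)..1, Complex.exp (y*(κ' + t*I))/((κ':ℂ) + t*I) with hV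
  have hG : (∫ t in (-1:ℝ)..1,
      Complex.exp ((y : ℂ) * ((κ' : ℂ) + Complex.I * (t : ℂ))) /
        ((κ' : ℂ) + Complex.I * (t : ℂ)) * Complex.I) = I • V := by
    rw [intervalIntegral.integral_mul_const, hV, smul_eq_mul, mul_comm]
    congr 1
    apply intervalIntegral.integral_congr
    intro t _
    simp only [mul_comm Complex.I]
  rw [hG]
  have habsc : ‖(1 / (2 * (Real.pi : ℂ) * Complex.I))‖ = (2*π)⁻¹ := by
    rw [norm_div, norm_one, norm_mul, norm_mul, Complex.norm_I, Complex.norm_two,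
      Complex.norm_real, Real.norm_eq_abs, _root_.abs_of_pos Real.pi_pos]
    rw [mul_one, one_div]
  -- the two horizontal bounds and the far vertical bound, in each case
  have key : ∃ W : ℂ, ((v y : ℂ) - (1 / (2 * (Real.pi : ℂ) * Complex.I)) * (I • V))
        = -(1 / (2 * (Real.pi : ℂ) * Complex.I)) * W ∧
      ‖W‖ ≤ 2 * Real.exp (y*κ') / |y| + 2 * Real.exp (-|y| * σ) / σ := by
    rcases lt_or_gt_of_ne hy with hneg | hpos
    · -- y < 0 : v y = 0, shift right
      have hv : v y = 0 := if_neg (not_le.2 hneg)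
      have hrect := rect_nopole y κ' σ hκ' hκσ
      refine ⟨(∫ x in κ'..σ, Complex.exp (y*(x + ((-1:ℝ):ℂ)*I))/((x:ℂ) + ((-1:ℝ):ℂ)*I))
        - (∫ x in κ'..σ, Complex.exp (y*(x + ((1:ℝ):ℂ)*I))/((x:ℂ) + ((1:ℝ):ℂ)*I))
        + I • (∫ t in (-1:ℝ)..1, Complex.exp (y*(σ + t*I))/((σ:ℂ) + t*I)), ?_, ?_⟩
      · have hIV : I • V = (∫ x in κ'..σ, Complex.exp (y*(x + ((-1:ℝ):ℂ)*I))/((x:ℂ) + ((-1:ℝ):ℂ)*I))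
            - (∫ x in κ'..σ, Complex.exp (y*(x + ((1:ℝ):ℂ)*I))/((x:ℂ) + ((1:ℝ):ℂ)*I))
            + I • (∫ t in (-1:ℝ)..1, Complex.exp (y*(σ + t*I))/((σ:ℂ) + t*I)) := by
          simp only [smul_eq_mul] at hrect ⊢
          linear_combination -hrect
        rw [hv, hIV]
        push_cast
        ring
      · have h1 := horiz_bound y (-1) κ' σ (by norm_num) hκσ hy
        have h2 := horiz_bound y 1 κ' σ (by norm_num) hκσ hy
        have h3 := vert_bound y σ hσ0.ne'
        have hb : (Real.exp (y*σ) - Real.exp (y*κ')) / y ≤ Real.exp (y*κ') / |y| := by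
          rw [_root_.abs_of_neg hneg]
          rw [show (Real.exp (y*σ) - Real.exp (y*κ')) / y
              = (Real.exp (y*κ') - Real.exp (y*σ)) / (-y) by ring]
          apply div_le_div_of_nonneg_right ?_ (neg_pos.2 hneg).le |>.trans_eq rfl
          linarith [Real.exp_pos (y*σ)]
        have hexpσ : Real.exp (y*σ) = Real.exp (-|y| * σ) := by
          rw [_root_.abs_of_neg hneg]; ring_nf
        have habsσ : |σ| = σ := _root_.abs_of_pos hσ0
        rw [hexpσ, habsσ] at h3
        have hsmul : ‖I • (∫ t in (-1:ℝ)..1, Complex.exp (y*(σ + t*I))/((σ:ℂ) + t*I))‖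
            = ‖∫ t in (-1:ℝ)..1, Complex.exp (y*(σ + t*I))/((σ:ℂ) + t*I)‖ := by
          rw [norm_smul, Complex.norm_I, one_mul]
        calc ‖_ - _ + _‖ ≤ ‖_ - _‖ + ‖_‖ := norm_add_le _ _
          _ ≤ ‖_‖ + ‖_‖ + ‖_‖ := by exact add_le_add_left (norm_sub_le _ _) _
          _ ≤ 2 * Real.exp (y*κ') / |y| + 2 * Real.exp (-|y| * σ) / σ := by
              rw [hsmul]
              have e1 := le_trans h1 hb
              have e2 := le_trans h2 hb
              rw [show (2:ℝ) * Real.exp (y*κ') / |y|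
                = Real.exp (y*κ') / |y| + Real.exp (y*κ') / |y| by ring]
              linarith
    · -- y > 0 : v y = 1, shift left, pick up residue
      have hv : v y = 1 := if_pos hpos.le
      have hrect := rect_pole y κ' σ hκ' hσ0
      have hσκ : -σ ≤ κ' := by linarith
      refine ⟨(∫ x in (-σ)..κ', Complex.exp (y*(x + ((1:ℝ):ℂ)*I))/((x:ℂ) + ((1:ℝ):ℂ)*I))
        - (∫ x in (-σ)..κ', Complex.exp (y*(x + ((-1:ℝ):ℂ)*I))/((x:ℂ) + ((-1:ℝ):ℂ)*I))
        + I • (∫ t in (-1:ℝ)..1, Complex.exp (y*((-σ:ℝ) + t*I))/(((-σ:ℝ):ℂ) + t*I)), ?_, ?_⟩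
      · have hc1 : (1 / (2 * (Real.pi : ℂ) * Complex.I)) * (2*(π:ℂ)*I) = 1 := by
          have hπ : ((π:ℝ):ℂ) ≠ 0 := Complex.ofReal_ne_zero.2 Real.pi_ne_zero
          field_simp
        rw [hv]
        simp only [smul_eq_mul] at hrect ⊢
        push_cast at hrect ⊢
        linear_combination (-(1 / (2 * (Real.pi : ℂ) * Complex.I))) * hrect - hc1
      · have h1 := horiz_bound y (-1) (-σ) κ' (by norm_num) hσκ hy
        have h2 := horiz_bound y 1 (-σ) κ' (by norm_num) hσκ hy
        have hb : (Real.exp (y*κ') - Real.exp (y*(-σ))) / y ≤ Real.exp (y*κ') / |y| := by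
          rw [_root_.abs_of_pos hpos]
          apply div_le_div_of_nonneg_right ?_ hpos.le |>.trans_eq rfl
          linarith [Real.exp_pos (y*(-σ))]
        have h3 := vert_bound y (-σ) (by linarith : (-σ:ℝ) ≠ 0)
        have hexpσ : Real.exp (y*(-σ)) = Real.exp (-|y| * σ) := by
          rw [_root_.abs_of_pos hpos]; ring_nf
        have habsσ : |(-σ:ℝ)| = σ := by rw [abs_neg, _root_.abs_of_pos hσ0]
        rw [hexpσ, habsσ] at h3
        have hsmul : ‖I • (∫ t in (-1:ℝ)..1, Complex.exp (y*((-σ:ℝ) + t*I))/(((-σ:ℝ):ℂ) + t*I))‖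
            = ‖∫ t in (-1:ℝ)..1, Complex.exp (y*((-σ:ℝ) + t*I))/(((-σ:ℝ):ℂ) + t*I)‖ := by
          rw [norm_smul, Complex.norm_I, one_mul]
        calc ‖_ - _ + _‖ ≤ ‖_ - _‖ + ‖_‖ := norm_add_le _ _
          _ ≤ ‖_‖ + ‖_‖ + ‖_‖ := by exact add_le_add_left (norm_sub_le _ _) _
          _ ≤ 2 * Real.exp (y*κ') / |y| + 2 * Real.exp (-|y| * σ) / σ := by
              rw [hsmul]
              have e1 := le_trans h1 hb
              have e2 := le_trans h2 hb
              rw [show (2:ℝ) * Real.exp (y*κ') / |y|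
                = Real.exp (y*κ') / |y| + Real.exp (y*κ') / |y| by ring]
              linarith
  obtain ⟨W, hWe, hWb⟩ := key
  rw [hWe]
  rw [norm_mul, norm_neg, habsc]
  calc (2*π)⁻¹ * ‖W‖ ≤ (2*π)⁻¹ * (2 * Real.exp (y*κ') / |y| + 2 * Real.exp (-|y| * σ) / σ) := by
        apply mul_le_mul_of_nonneg_left _ (by positivity)
        exact hWb
    _ = Real.exp (y * κ') / (Real.pi * |y|) + Real.exp (-|y| * σ) / (Real.pi * σ) := by
        have hy' : |y| ≠ 0 := abs_ne_zero.2 hy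
        field_simp


theorem perron_kernel_bound_large_y (κ' y : ℝ) (hκ' : 0 < κ') (hy : y ≠ 0) :
    ‖((v y : ℂ) -
        (1 / (2 * (Real.pi : ℂ) * Complex.I)) *
          ∫ t in (-1:ℝ)..1,
            Complex.exp ((y : ℂ) * ((κ' : ℂ) + Complex.I * (t : ℂ))) /
              ((κ' : ℂ) + Complex.I * (t : ℂ)) * Complex.I)‖ ≤
      Real.exp (y * κ') / (Real.pi * |y|) := by
  have h1 : Tendsto (fun σ : ℝ => |y| * σ) atTop atTop :=
    Tendsto.const_mul_atTop (abs_pos.2 hy) tendsto_id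
  have T1 : Tendsto (fun σ : ℝ => Real.exp (-(|y| * σ))) atTop (𝓝 0) :=
    Real.tendsto_exp_atBot.comp (tendsto_neg_atTop_atBot.comp h1)
  have T2 : Tendsto (fun σ : ℝ => (π * σ)⁻¹) atTop (𝓝 0) :=
    tendsto_inv_atTop_zero.comp (Tendsto.const_mul_atTop Real.pi_pos tendsto_id)
  have T : Tendsto (fun σ : ℝ => Real.exp (-|y| * σ) / (π * σ)) atTop (𝓝 0) := by
    have := T1.mul T2
    simpa [div_eq_mul_inv, neg_mul] using this
  have hTail : Tendsto
      (fun σ : ℝ => Real.exp (y * κ') / (Real.pi * |y|) + Real.exp (-|y| * σ) / (π * σ))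
      atTop (𝓝 (Real.exp (y * κ') / (Real.pi * |y|))) := by
    simpa using tendsto_const_nhds.add T
  apply ge_of_tendsto hTail
  filter_upwards [eventually_ge_atTop (max κ' 1)] with σ hσ
  exact core κ' y σ hκ' hy hσ

end PerronAux
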